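/- Let S be a maximal independent set and D = {x, y} a 2-subset of S. If there exists a non-solution vertex v ∈ F(D) such that (S \ D) ∪ {v} is a maximal independent set, then F(D) contains a 2-tight vertex. -/

import Mathlib

open Finset

variable {V : Type*}

/-- `S` is an independent set in `G`: no two vertices of `S` are adjacent. -/
def Indep (G : SimpleGraph V) (S : Finset V) : Prop :=
  ∀ u ∈ S, ∀ v ∈ S, ¬ G.Adj u v

/-- `S` is a dominating set in `G`: every vertex outside `S` has a neighbor in `S`. -/
def Dominating (G : SimpleGraph V) (S : Finset V) : Prop :=
  ∀ v, v ∉ S → ∃ u ∈ S, G.Adj u v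

/-- `S` is a maximal independent set (w.r.t. set inclusion) in `G`. -/
def MaxIndep (G : SimpleGraph V) (S : Finset V) : Prop :=
  Indep G S ∧ ∀ T, Indep G T → S ⊆ T → T = S

/-- The tightness of a vertex `v` w.r.t. a solution `S`: the number of neighbors of `v` in `S`. -/
def tight [Fintype V] [DecidableEq V] (G : SimpleGraph V) [DecidableRel G.Adj]
    (S : Finset V) (v : V) : ℕ :=
  (G.neighborFinset v ∩ S).card

/-- `F(D)`: the non-solution vertices all of whose solution neighbors lie in `D`. -/
def FD [Fintype V] [DecidableEq V] (G : SimpleGraph V) [DecidableRel G.Adj]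
    (S D : Finset V) : Finset V :=
  Finset.univ.filter (fun v => v ∉ S ∧ G.neighborFinset v ∩ S ⊆ D)

/-- `A` is a maximal independent set of the subgraph of `G` induced on `W`. -/
def MaxIndepIn (G : SimpleGraph V) (W A : Finset V) : Prop :=
  A ⊆ W ∧ Indep G A ∧ ∀ T ⊆ W, Indep G T → A ⊆ T → T = A

/-- `S` is `k`-minimal: no `k`-swap yields a strictly smaller solution. -/
def KMinimal [Fintype V] [DecidableEq V] (G : SimpleGraph V) (S : Finset V) (k : ℕ) : Prop :=
  ¬ ∃ D A : Finset V, D ⊆ S ∧ D.card = k ∧ A ⊆ Finset.univ \ S ∧ A.Nonempty ∧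
      MaxIndep G ((S \ D) ∪ A) ∧ ((S \ D) ∪ A).card < S.card

theorem stmt_7 [Fintype V] [DecidableEq V] (G : SimpleGraph V) [DecidableRel G.Adj]
    (S : Finset V) (x y : V) (hS : MaxIndep G S) (hxy : x ≠ y)
    (hx : x ∈ S) (hy : y ∈ S)
    (h : ∃ v ∈ FD G S {x, y}, MaxIndep G ((S \ {x, y}) ∪ {v})) :
    ∃ w ∈ FD G S {x, y}, tight G S w = 2 := by
  obtain ⟨v, hvFD, hT⟩ := h
  have hv : v ∉ S ∧ G.neighborFinset v ∩ S ⊆ {x, y} := by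
    simpa [FD] using hvFD
  refine ⟨v, hvFD, ?_⟩
  -- key claim: v is adjacent to every z ∈ {x,y}
  have key : ∀ z ∈ ({x, y} : Finset V), G.Adj v z := by
    intro z hz
    have hzS : z ∈ S := by
      rcases Finset.mem_insert.mp hz with h1 | h1
      · subst h1; exact hx
      · have : z = y := Finset.mem_singleton.mp h1
        subst this; exact hy
    by_contra hadj
    set T : Finset V := (S \ {x, y}) ∪ {v} with hTdef
    have hzT : z ∉ T := by
      simp only [hTdef, Finset.mem_union, Finset.mem_sdiff, Finset.mem_singleton]
      rintro (⟨_, hzxy⟩ | hzv)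
      · exact hzxy hz
      · exact hv.1 (hzv ▸ hzS)
    have hvnadj : ∀ u ∈ S \ ({x, y} : Finset V), ¬ G.Adj v u := by
      intro u hu hadjvu
      have : u ∈ G.neighborFinset v ∩ S := by
        simp [SimpleGraph.mem_neighborFinset, hadjvu, (Finset.mem_sdiff.mp hu).1]
      exact (Finset.mem_sdiff.mp hu).2 (hv.2 this)
    have hindep : Indep G (insert z T) := by
      intro a ha b hb
      rcases Finset.mem_insert.mp ha with rfl | haT <;>
        rcases Finset.mem_insert.mp hb with rfl | hbT
      · exact fun hab => G.irrefl hab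
      · rcases Finset.mem_union.mp hbT with hb1 | hb1
        · exact fun hab => hS.1 _ hzS _ (Finset.mem_sdiff.mp hb1).1 hab
        · have : b = v := Finset.mem_singleton.mp hb1
          subst this
          exact fun hab => hadj hab.symm
      · rcases Finset.mem_union.mp haT with ha1 | ha1
        · exact fun hab => hS.1 _ (Finset.mem_sdiff.mp ha1).1 _ hzS hab
        · have : a = v := Finset.mem_singleton.mp ha1
          subst this
          exact hadj
      · exact hT.1 _ haT _ hbT
    have := hT.2 (insert z T) hindep (Finset.subset_insert _ _)
    exact hzT (this ▸ Finset.mem_insert_self z T)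
  -- hence N(v) ∩ S = {x, y}
  have heq : G.neighborFinset v ∩ S = {x, y} := by
    apply Finset.Subset.antisymm hv.2
    intro z hz
    have hzS : z ∈ S := by
      rcases Finset.mem_insert.mp hz with h1 | h1
      · subst h1; exact hx
      · have : z = y := Finset.mem_singleton.mp h1
        subst this; exact hy
    have := key z hz
    simp [SimpleGraph.mem_neighborFinset, this, hzS]
  rw [tight, heq, Finset.card_insert_of_notMem (by simpa using hxy), Finset.card_singleton]
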